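/- Let $\Omega \subseteq \{(\rho,z) \in \mathbb{R}^2 : \rho > 0\}$ be open, $n \geq 1$, and let $u_1,\dots,u_n$ be twice continuously differentiable on $\Omega$ with $\partial_\rho^2 u_i + \tfrac{1}{\rho}\partial_\rho u_i + \partial_z^2 u_i = 0$ for each $i$. Suppose $\alpha$ is twice continuously differentiable on $\Omega$ and satisfies $\partial_\rho \alpha = \tfrac{\rho}{8}\sum_{i=1}^n \big((\partial_\rho u_i)^2 - (\partial_z u_i)^2\big) - \tfrac{1}{2\rho}$ and $\partial_z \alpha = \tfrac{\rho}{4}\sum_{i=1}^n \partial_\rho u_i\, \partial_z u_i$ on $\Omega$. Then $\partial_\rho^2 \alpha + \partial_z^2 \alpha = -\tfrac{1}{8}\sum_{i=1}^n \big((\partial_\rho u_i)^2 + (\partial_z u_i)^2\big) + \tfrac{1}{2\rho^2}$ on $\Omega$. -/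

import Mathlib

/-- The partial derivative `∂_ρ` of a function on the `(ρ,z)` half-plane. -/
noncomputable def pderivRho (f : ℝ × ℝ → ℝ) (p : ℝ × ℝ) : ℝ :=
  fderiv ℝ f p (1, 0)

/-- The partial derivative `∂_z` of a function on the `(ρ,z)` half-plane. -/
noncomputable def pderivZ (f : ℝ × ℝ → ℝ) (p : ℝ × ℝ) : ℝ :=
  fderiv ℝ f p (0, 1)

/-- **Flat Laplacian of the quadrature coefficient `α`.** Let `Ω ⊆ {ρ > 0}` be open,
`u₁, …, uₙ` be `C²` solutions of the axisymmetric Laplace equation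
`∂²_ρ uᵢ + ρ⁻¹ ∂_ρ uᵢ + ∂²_z uᵢ = 0` on `Ω`, and let `α` be `C²` on `Ω` with
`∂_ρ α = (ρ/8) ∑ ((∂_ρ uᵢ)² - (∂_z uᵢ)²) - 1/(2ρ)` and
`∂_z α = (ρ/4) ∑ ∂_ρ uᵢ ∂_z uᵢ` on `Ω`.  Then
`∂²_ρ α + ∂²_z α = -(1/8) ∑ ((∂_ρ uᵢ)² + (∂_z uᵢ)²) + 1/(2ρ²)` on `Ω`. -/
theorem laplacian_alpha (Ω : Set (ℝ × ℝ)) (hΩ : IsOpen Ω)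
    (hΩpos : ∀ p ∈ Ω, 0 < p.1) (n : ℕ) (hn : 1 ≤ n) (u : Fin n → ℝ × ℝ → ℝ)
    (hreg : ∀ i, ContDiffOn ℝ 2 (u i) Ω)
    (hharm : ∀ i, ∀ p ∈ Ω,
      pderivRho (pderivRho (u i)) p + (1 / p.1) * pderivRho (u i) p +
        pderivZ (pderivZ (u i)) p = 0)
    (α : ℝ × ℝ → ℝ) (hα : ContDiffOn ℝ 2 α Ω)
    (hαρ : ∀ p ∈ Ω, pderivRho α p =
      p.1 / 8 * (∑ i, ((pderivRho (u i) p) ^ 2 - (pderivZ (u i) p) ^ 2)) -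
        1 / (2 * p.1))
    (hαz : ∀ p ∈ Ω, pderivZ α p =
      p.1 / 4 * (∑ i, pderivRho (u i) p * pderivZ (u i) p)) :
    ∀ p ∈ Ω,
      pderivRho (pderivRho α) p + pderivZ (pderivZ α) p =
        -(1 / 8) * (∑ i, ((pderivRho (u i) p) ^ 2 + (pderivZ (u i) p) ^ 2)) +
          1 / (2 * p.1 ^ 2) := by
  intro p hp
  have hρ : 0 < p.1 := hΩpos p hp
  have hρne : p.1 ≠ 0 := ne_of_gt hρ
  have hmem : Ω ∈ nhds p := hΩ.mem_nhds hp
  have hu2 : ∀ i, ContDiffAt ℝ 2 (u i) p := fun i => (hreg i).contDiffAt hmem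
  have hfd : ∀ i, DifferentiableAt ℝ (fderiv ℝ (u i)) p := fun i =>
    (((hu2 i).fderiv_right (m := 1) (le_refl 2)).differentiableAt one_ne_zero)
  -- first partials have derivatives given by the flipped second derivative
  have hDa : ∀ i, HasFDerivAt (pderivRho (u i))
      ((fderiv ℝ (fderiv ℝ (u i)) p).flip ((1:ℝ),(0:ℝ))) p := by
    intro i
    have h := (hfd i).hasFDerivAt.clm_apply (hasFDerivAt_const ((1:ℝ),(0:ℝ)) p)
    simp at h; exact h
  have hDb : ∀ i, HasFDerivAt (pderivZ (u i))
      ((fderiv ℝ (fderiv ℝ (u i)) p).flip ((0:ℝ),(1:ℝ))) p := by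
    intro i
    have h := (hfd i).hasFDerivAt.clm_apply (hasFDerivAt_const ((0:ℝ),(1:ℝ)) p)
    simp at h; exact h
  have hda : ∀ i, DifferentiableAt ℝ (pderivRho (u i)) p := fun i => (hDa i).differentiableAt
  have hdb : ∀ i, DifferentiableAt ℝ (pderivZ (u i)) p := fun i => (hDb i).differentiableAt
  -- symmetry of second derivatives
  have hmixed : ∀ i, fderiv ℝ (pderivRho (u i)) p ((0:ℝ),(1:ℝ))
      = fderiv ℝ (pderivZ (u i)) p ((1:ℝ),(0:ℝ)) := by
    intro i
    rw [(hDa i).fderiv, (hDb i).fderiv]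
    simp only [ContinuousLinearMap.flip_apply]
    exact ((hu2 i).isSymmSndFDerivAt (by simp)).eq _ _
  -- derivative of the sum S
  have hS : HasFDerivAt
      (fun q : ℝ × ℝ => ∑ i, ((pderivRho (u i) q) ^ 2 - (pderivZ (u i) q) ^ 2))
      (∑ i, ((2 * pderivRho (u i) p) • fderiv ℝ (pderivRho (u i)) p
        - (2 * pderivZ (u i) p) • fderiv ℝ (pderivZ (u i)) p)) p := by
    apply HasFDerivAt.fun_sum
    intro i _
    have h1 : HasFDerivAt (fun q => pderivRho (u i) q ^ 2)
        ((2 * pderivRho (u i) p) • fderiv ℝ (pderivRho (u i)) p) p := by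
      simpa [pow_two, two_mul, add_smul] using ((hda i).hasFDerivAt.fun_mul (hda i).hasFDerivAt)
    have h2 : HasFDerivAt (fun q => pderivZ (u i) q ^ 2)
        ((2 * pderivZ (u i) p) • fderiv ℝ (pderivZ (u i)) p) p := by
      simpa [pow_two, two_mul, add_smul] using ((hdb i).hasFDerivAt.fun_mul (hdb i).hasFDerivAt)
    exact h1.sub h2
  -- derivative of the sum T
  have hT : HasFDerivAt
      (fun q : ℝ × ℝ => ∑ i, pderivRho (u i) q * pderivZ (u i) q)
      (∑ i, ((pderivRho (u i) p) • fderiv ℝ (pderivZ (u i)) p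
        + (pderivZ (u i) p) • fderiv ℝ (pderivRho (u i)) p)) p :=
    HasFDerivAt.fun_sum (fun i _ => (hda i).hasFDerivAt.mul (hdb i).hasFDerivAt)
  have hfst : HasFDerivAt (fun q : ℝ × ℝ => q.1) (ContinuousLinearMap.fst ℝ ℝ ℝ) p :=
    hasFDerivAt_fst
  have hdiv8 : HasFDerivAt (fun q : ℝ × ℝ => q.1 / 8)
      ((8:ℝ)⁻¹ • ContinuousLinearMap.fst ℝ ℝ ℝ) p := by
    simpa [div_eq_inv_mul] using hfst.const_mul ((8:ℝ)⁻¹)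
  have hdiv4 : HasFDerivAt (fun q : ℝ × ℝ => q.1 / 4)
      ((4:ℝ)⁻¹ • ContinuousLinearMap.fst ℝ ℝ ℝ) p := by
    simpa [div_eq_inv_mul] using hfst.const_mul ((4:ℝ)⁻¹)
  have hinv : HasFDerivAt (fun q : ℝ × ℝ => 1 / (2 * q.1))
      ((-2 / (2 * p.1) ^ 2 : ℝ) • ContinuousLinearMap.fst ℝ ℝ ℝ) p := by
    have hd : HasDerivAt (fun x : ℝ => 1 / (2 * x)) (-2 / (2 * p.1) ^ 2) p.1 := by
      have h2x : HasDerivAt (fun x : ℝ => 2 * x) 2 p.1 := by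
        simpa using (hasDerivAt_id p.1).const_mul (2:ℝ)
      simpa [one_div] using h2x.fun_inv (by positivity)
    exact hd.comp_hasFDerivAt p hfst
  -- the two second derivatives of α
  have hFα : HasFDerivAt (pderivRho α)
      ((p.1 / 8) • (∑ i, ((2 * pderivRho (u i) p) • fderiv ℝ (pderivRho (u i)) p
          - (2 * pderivZ (u i) p) • fderiv ℝ (pderivZ (u i)) p))
        + (∑ i, ((pderivRho (u i) p) ^ 2 - (pderivZ (u i) p) ^ 2)) •
            ((8:ℝ)⁻¹ • ContinuousLinearMap.fst ℝ ℝ ℝ)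
        - (-2 / (2 * p.1) ^ 2 : ℝ) • ContinuousLinearMap.fst ℝ ℝ ℝ) p := by
    apply HasFDerivAt.congr_of_eventuallyEq ((hdiv8.mul hS).sub hinv)
    filter_upwards [hmem] with q hq
    exact hαρ q hq
  have hGα : HasFDerivAt (pderivZ α)
      ((p.1 / 4) • (∑ i, ((pderivRho (u i) p) • fderiv ℝ (pderivZ (u i)) p
          + (pderivZ (u i) p) • fderiv ℝ (pderivRho (u i)) p))
        + (∑ i, pderivRho (u i) p * pderivZ (u i) p) •
            ((4:ℝ)⁻¹ • ContinuousLinearMap.fst ℝ ℝ ℝ)) p := by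
    apply HasFDerivAt.congr_of_eventuallyEq (hdiv4.mul hT)
    filter_upwards [hmem] with q hq
    exact hαz q hq
  show fderiv ℝ (pderivRho α) p ((1:ℝ),(0:ℝ)) + fderiv ℝ (pderivZ α) p ((0:ℝ),(1:ℝ)) = _
  rw [hFα.fderiv, hGα.fderiv]
  simp only [ContinuousLinearMap.add_apply, ContinuousLinearMap.sub_apply,
    ContinuousLinearMap.smul_apply, ContinuousLinearMap.coe_sum', Finset.sum_apply,
    smul_eq_mul, ContinuousLinearMap.coe_fst']
  have hA : ∀ i, (fderiv ℝ (pderivRho (u i)) p) ((1:ℝ),(0:ℝ)) =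
      -(1 / p.1 * pderivRho (u i) p) - (fderiv ℝ (pderivZ (u i)) p) ((0:ℝ),(1:ℝ)) := by
    intro i
    have h' : fderiv ℝ (pderivRho (u i)) p ((1:ℝ),(0:ℝ)) + 1 / p.1 * pderivRho (u i) p +
        fderiv ℝ (pderivZ (u i)) p ((0:ℝ),(1:ℝ)) = 0 := hharm i p hp
    linarith
  simp only [hmixed, hA]
  rw [Finset.mul_sum, Finset.mul_sum, Finset.sum_mul, Finset.sum_mul, Finset.mul_sum]
  have hz : ∑ i : Fin n,
      (p.1 / 8 *
          (2 * pderivRho (u i) p *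
              (-(1 / p.1 * pderivRho (u i) p) - (fderiv ℝ (pderivZ (u i)) p) ((0:ℝ),(1:ℝ))) -
            2 * pderivZ (u i) p * (fderiv ℝ (pderivZ (u i)) p) ((1:ℝ),(0:ℝ)))
        + (pderivRho (u i) p ^ 2 - pderivZ (u i) p ^ 2) * ((8:ℝ)⁻¹ * 1)
        + (p.1 / 4 *
              (pderivRho (u i) p * (fderiv ℝ (pderivZ (u i)) p) ((0:ℝ),(1:ℝ)) +
                pderivZ (u i) p * (fderiv ℝ (pderivZ (u i)) p) ((1:ℝ),(0:ℝ)))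
            + pderivRho (u i) p * pderivZ (u i) p * ((4:ℝ)⁻¹ * 0))
        - -(1 / 8) * (pderivRho (u i) p ^ 2 + pderivZ (u i) p ^ 2)) = 0 := by
    apply Finset.sum_eq_zero
    intro i _
    field_simp
    ring
  rw [Finset.sum_sub_distrib, Finset.sum_add_distrib, Finset.sum_add_distrib,
    Finset.sum_add_distrib] at hz
  have hc : (-2 / (2 * p.1) ^ 2 * 1 : ℝ) = -(1 / (2 * p.1 ^ 2)) := by
    field_simp
  linarith [hz, hc]
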